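/- Let T be a t-norm and let R be a fuzzy T-equivalence on a set U with a dually well-ordered spectrum. Then for any subset A ⊆ U, A^E = {x ∈ U | μ_{[A]^R}(x) = 1}; that is, the upper approximation of A by the crisp equivalence E equals the core of the fuzzy upper approximation of A. -/
import Mathlib


open unitInterval

noncomputable section

instance : Fact ((0:ℝ) ≤ 1) := ⟨zero_le_one⟩

/-- A t-norm on the unit interval: commutative, associative, monotone in each
argument, with `1` as unit. -/
def IsTnorm (T : I → I → I) : Prop :=
  (∀ x y, T x y = T y x) ∧
  (∀ x y z, T (T x y) z = T x (T y z)) ∧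
  (∀ x₁ x₂ y, x₁ ≤ x₂ → T x₁ y ≤ T x₂ y) ∧
  (∀ x y₁ y₂, y₁ ≤ y₂ → T x y₁ ≤ T x y₂) ∧
  (∀ x, T x 1 = x)

/-- A fuzzy `T`-equivalence: reflexive, symmetric, `T`-transitive fuzzy relation. -/
def IsFuzzyTEquiv {U : Type*} (T : I → I → I) (μ : U → U → I) : Prop :=
  (∀ x, μ x x = 1) ∧ (∀ x y, μ x y = μ y x) ∧ (∀ x y z, T (μ x y) (μ y z) ≤ μ x z)

/-- Fuzzy upper approximation of a crisp set `A`: `sup {μ x y | y ∈ A}` (`sup ∅ = 0`). -/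
def upperApp {U : Type*} (μ : U → U → I) (A : Set U) (x : U) : I := sSup (μ x '' A)

/-- Fuzzy lower approximation of a crisp set `A`: `inf {1 - μ x y | y ∉ A}` (`inf ∅ = 1`). -/
def lowerApp {U : Type*} (μ : U → U → I) (A : Set U) (x : U) : I :=
  sInf ((fun y => σ (μ x y)) '' Aᶜ)

/-- The spectrum of a fuzzy relation. -/
def fuzzySpectrum {U : Type*} (μ : U → U → I) : Set I := {r | ∃ x y, μ x y = r}

/-- `R` has a dually well-ordered spectrum: every nonempty subset of the
spectrum has a greatest element. -/
def DuallyWellOrdered {U : Type*} (μ : U → U → I) : Prop :=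
  ∀ s ⊆ fuzzySpectrum μ, s.Nonempty → ∃ m ∈ s, ∀ r ∈ s, r ≤ m

/-- Upper approximation by the crisp equivalence `E = {(x,y) | μ x y = 1}`. -/
def upperE {U : Type*} (μ : U → U → I) (A : Set U) : Set U :=
  {x | ({y | μ x y = 1} ∩ A).Nonempty}

/-- Lower approximation by the crisp equivalence `E = {(x,y) | μ x y = 1}`. -/
def lowerE {U : Type*} (μ : U → U → I) (A : Set U) : Set U :=
  {x | {y | μ x y = 1} ⊆ A}

/-- Upper approximation by the support relation `S = {(x,y) | μ x y > 0}`. -/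
def upperS {U : Type*} (μ : U → U → I) (A : Set U) : Set U :=
  {x | ({y | 0 < μ x y} ∩ A).Nonempty}

/-- Lower approximation by the support relation `S = {(x,y) | μ x y > 0}`. -/
def lowerS {U : Type*} (μ : U → U → I) (A : Set U) : Set U :=
  {x | {y | 0 < μ x y} ⊆ A}

/-- `A^E` equals the core of the fuzzy upper approximation of `A`. -/
theorem stmt1 {U : Type*} (T : I → I → I) (μ : U → U → I)
    (hT : IsTnorm T) (hR : IsFuzzyTEquiv T μ) (hD : DuallyWellOrdered μ)
    (A : Set U) :
    upperE μ A = {x | upperApp μ A x = 1} := by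
  ext x
  constructor
  · rintro ⟨y, hy1, hyA⟩
    have hmem : (1 : I) ∈ μ x '' A := ⟨y, hyA, hy1⟩
    exact le_antisymm le_top (le_sSup hmem)
  · intro hx
    rcases A.eq_empty_or_nonempty with rfl | ⟨y0, hy0⟩
    · exfalso
      have : upperApp μ (∅ : Set U) x = 0 := by
        simp [upperApp, sSup_empty]
        rfl
      rw [hx] at this
      exact one_ne_zero (congrArg Subtype.val this)
    · have hsub : μ x '' A ⊆ fuzzySpectrum μ := by
        rintro r ⟨y, _, rfl⟩; exact ⟨x, y, rfl⟩
      obtain ⟨m, hm, hmax⟩ := hD (μ x '' A) hsub ⟨μ x y0, y0, hy0, rfl⟩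
      have : sSup (μ x '' A) ≤ m := sSup_le hmax
      have hm1 : m = 1 := le_antisymm le_top (hx ▸ this)
      obtain ⟨y, hyA, hy⟩ := hm
      exact ⟨y, hy.trans hm1, hyA⟩
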